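/- arXiv:2509.11597 — 5 statements merged into one kernel-verified Lean document; each statement's English description precedes it below -/
import Mathlib

section
/- The image of the set {z ∈ ℂ : |z| > 1} under the Joukowski map φ(z) = z + 1/z is exactly ℂ \ [-2, 2], where [-2,2] denotes the real segment {x + 0i : -2 ≤ x ≤ 2}. -/
theorem joukowski_image_exterior :
    (fun z : ℂ => z + 1 / z) '' {z : ℂ | 1 < ‖z‖} =
      Set.univ \ ((fun x : ℝ => (x : ℂ)) '' Set.Icc (-2 : ℝ) 2) := by
  ext w
  simp only [Set.mem_image, Set.mem_setOf_eq, Set.mem_diff, Set.mem_univ, true_and]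
  constructor
  · rintro ⟨z, hz, rfl⟩
    rintro ⟨x, ⟨hx1, hx2⟩, hx⟩
    have hz0 : z ≠ 0 := by
      intro h; simp [h] at hz; linarith
    have hq : z ^ 2 - (x : ℂ) * z + 1 = 0 := by
      have : z + 1 / z = (x : ℂ) := hx.symm
      field_simp at this
      linear_combination this
    set s : ℝ := Real.sqrt (4 - x ^ 2) with hs
    have hs2 : (s : ℝ) ^ 2 = 4 - x ^ 2 := Real.sq_sqrt (by nlinarith)
    have hs2' : (s : ℂ) ^ 2 = 4 - (x : ℂ) ^ 2 := by
      exact_mod_cast hs2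
    have hfac : (z - ((x : ℂ) + s * Complex.I) / 2) *
        (z - ((x : ℂ) - s * Complex.I) / 2) = 0 := by
      have hsi : ((s : ℂ) * Complex.I) ^ 2 = (x : ℂ) ^ 2 - 4 := by
        rw [mul_pow, Complex.I_sq, hs2']; ring
      linear_combination hq - (1 / 4 : ℂ) * hsi
    have habs : ∀ e : ℝ, z = ((x : ℂ) + e * Complex.I) / 2 → e ^ 2 = 4 - x ^ 2 → False := by
      intro e he he2
      have : ‖z‖ ^ 2 = 1 := by
        rw [Complex.sq_norm, he]
        simp [Complex.normSq_apply]
        nlinarith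
      nlinarith [hz]
    rcases mul_eq_zero.1 hfac with h | h
    · exact habs s (by linear_combination h) hs2
    · refine habs (-s) ?_ (by nlinarith)
      push_cast
      linear_combination h
  · intro hw
    obtain ⟨d, hd⟩ : ∃ d : ℂ, d ^ 2 = w ^ 2 - 4 :=
      IsAlgClosed.exists_pow_nat_eq (w ^ 2 - 4) (n := 2) (by norm_num)
    set z₁ := (w + d) / 2 with hz₁
    set z₂ := (w - d) / 2 with hz₂
    have hmul : z₁ * z₂ = 1 := by
      rw [hz₁, hz₂]; linear_combination (-1/4 : ℂ) * hd
    have h10 : z₁ ≠ 0 := left_ne_zero_of_mul_eq_one hmul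
    have h20 : z₂ ≠ 0 := right_ne_zero_of_mul_eq_one hmul
    have hsum : z₁ + z₂ = w := by rw [hz₁, hz₂]; ring
    have hinv1 : 1 / z₁ = z₂ := by field_simp [← hmul]; exact hmul.symm
    have hinv2 : 1 / z₂ = z₁ := by rw [mul_comm] at hmul; field_simp [← hmul]; exact hmul.symm
    have habsmul : ‖z₁‖ * ‖z₂‖ = 1 := by
      rw [← norm_mul, hmul, norm_one]
    rcases lt_trichotomy 1 (‖z₁‖) with h | h | h
    · exact ⟨z₁, h, by rw [hinv1]; exact hsum⟩
    · -- abs z₁ = 1 : contradiction with hw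
      exfalso
      have hn : Complex.normSq z₁ = 1 := by
        rw [← Complex.sq_norm, ← h]; ring
      have hc : z₂ = (starRingEnd ℂ) z₁ := by
        rw [← hinv1]
        field_simp
        rw [Complex.mul_conj, hn]
        norm_num
      have hwre : w = ((2 * z₁.re : ℝ) : ℂ) := by
        rw [← hsum, hc]
        simp [Complex.ext_iff, Complex.add_re, Complex.conj_re]
        ring
      refine hw ⟨2 * z₁.re, ⟨?_, ?_⟩, hwre.symm⟩
      · have := Complex.abs_re_le_norm z₁
        rw [← h] at this
        cases abs_le.1 this; linarith
      · have := Complex.abs_re_le_norm z₁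
        rw [← h] at this
        have := (abs_le.1 this).2; linarith
    · refine ⟨z₂, ?_, by rw [hinv2]; linear_combination hsum⟩
      have hpos : 0 < ‖z₁‖ := norm_pos_iff.mpr h10
      nlinarith
end

section
/- For 0 < c < 4, the map ψ(z) = (c/4)(z + 1/z + 2) is injective on {z ∈ ℂ : |z| > 1}, and its image is ℂ \ [0, c], where [0,c] is the real segment {x + 0i : 0 ≤ x ≤ c}. -/
/-- If `z` is a root of `X^2 - tX + 1` with `t` real, `t^2 ≤ 4`, then `|z| = 1`. -/
lemma joukowski_aux_abs_eq_one (t : ℝ) (ht : t ^ 2 ≤ 4) (z : ℂ)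
    (hz : z ^ 2 - (t : ℂ) * z + 1 = 0) : ‖z‖ = 1 := by
  set u : ℂ := 2 * z - t with hu_def
  have hu : u ^ 2 = (t : ℂ) ^ 2 - 4 := by
    simp only [hu_def]
    linear_combination 4 * hz
  have hre : u.re ^ 2 - u.im ^ 2 = t ^ 2 - 4 := by
    have := congrArg Complex.re hu
    simp [pow_two, Complex.mul_re] at this
    linarith [this]
  have him : u.re * u.im = 0 := by
    have := congrArg Complex.im hu
    simp [pow_two, Complex.mul_im] at this
    linarith [this]
  have ha : u.re = 0 := by
    rcases mul_eq_zero.mp him with h | h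
    · exact h
    · nlinarith [sq_nonneg u.re]
  have hure : u.re = 2 * z.re - t := by simp [hu_def]
  have huim : u.im = 2 * z.im := by simp [hu_def]
  have key : (2 * z.re - t) ^ 2 - (2 * z.im) ^ 2 = t ^ 2 - 4 := by
    rw [← hure, ← huim]; exact hre
  have ha' : 2 * z.re - t = 0 := by rw [← hure]; exact ha
  have hnsq : Complex.normSq z = 1 := by
    simp only [Complex.normSq_apply]
    linear_combination (-(1:ℝ)/4) * key + z.re * ha'
  have h2 : ‖z‖ ^ 2 = 1 := by rw [Complex.sq_norm, hnsq]
  nlinarith [norm_nonneg z]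

theorem shifted_joukowski_injOn_image (c : ℝ) (hc0 : 0 < c) (hc4 : c < 4) :
    Set.InjOn (fun z : ℂ => (c / 4 : ℂ) * (z + 1 / z + 2)) {z : ℂ | 1 < ‖z‖} ∧
    (fun z : ℂ => (c / 4 : ℂ) * (z + 1 / z + 2)) '' {z : ℂ | 1 < ‖z‖} =
      Set.univ \ ((fun x : ℝ => (x : ℂ)) '' Set.Icc (0 : ℝ) c) := by
  have hcC : (c : ℂ) ≠ 0 := by exact_mod_cast hc0.ne'
  have hc4C : (c / 4 : ℂ) ≠ 0 := by
    rw [div_ne_zero_iff]; exact ⟨hcC, by norm_num⟩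
  constructor
  · -- injectivity
    intro z hz w hw h
    simp only [Set.mem_setOf_eq] at hz hw
    have hz0 : z ≠ 0 := by intro h0; rw [h0, norm_zero] at hz; linarith
    have hw0 : w ≠ 0 := by intro h0; rw [h0, norm_zero] at hw; linarith
    have h' : z + 1 / z = w + 1 / w := by
      have h2 := mul_left_cancel₀ hc4C h
      linear_combination h2
    have key : (z - w) * (z * w - 1) = 0 := by
      field_simp at h'
      linear_combination h'
    rcases mul_eq_zero.mp key with h0 | h0
    · exact sub_eq_zero.mp h0
    · exfalso
      have hzw : z * w = 1 := by linear_combination h0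
      have : ‖z‖ * ‖w‖ = 1 := by
        rw [← norm_mul, hzw, norm_one]
      nlinarith [norm_nonneg w]
  · -- image
    ext v
    simp only [Set.mem_image, Set.mem_setOf_eq, Set.mem_diff, Set.mem_univ, true_and]
    constructor
    · rintro ⟨z, hz, rfl⟩
      rintro ⟨x, ⟨hx0, hxc⟩, hxv⟩
      have hz0 : z ≠ 0 := by intro h0; rw [h0, norm_zero] at hz; linarith
      set t : ℝ := 4 * x / c - 2 with ht_def
      have ht2 : t ^ 2 ≤ 4 := by
        have h1 : 0 ≤ 4 * x / c := by positivity
        have h2 : 4 * x / c ≤ 4 := by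
          rw [div_le_iff₀ hc0]; linarith
        have h3 : -2 ≤ t := by rw [ht_def]; linarith
        have h4 : t ≤ 2 := by rw [ht_def]; linarith
        nlinarith [h3, h4]
      have heq : z ^ 2 - (t : ℂ) * z + 1 = 0 := by
        have hxv' : (c / 4 : ℂ) * (z + 1 / z + 2) = (x : ℂ) := hxv.symm
        have htC : (t : ℂ) = 4 * (x : ℂ) / (c : ℂ) - 2 := by
          push_cast [ht_def]; ring
        have hB : (c : ℂ) * (z * z + 1 + 2 * z) = (x : ℂ) * (4 * z) := by
          field_simp at hxv'
          linear_combination hxv'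
        apply mul_left_cancel₀ hcC
        rw [htC, mul_zero]
        field_simp
        linear_combination hB
      have := joukowski_aux_abs_eq_one t ht2 z heq
      rw [this] at hz
      exact lt_irrefl 1 hz
    · intro hv
      set w : ℂ := 4 / (c : ℂ) * v - 2 with hw_def
      have hvw : (c / 4 : ℂ) * (w + 2) = v := by
        rw [hw_def]; field_simp; ring
      obtain ⟨d, hd⟩ := IsAlgClosed.exists_pow_nat_eq (w ^ 2 - 4) zero_lt_two
      set z₁ : ℂ := (w + d) / 2 with hz1
      set z₂ : ℂ := (w - d) / 2 with hz2
      have hprod : z₁ * z₂ = 1 := by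
        rw [hz1, hz2]
        field_simp
        linear_combination -hd
      have hsum : z₁ + z₂ = w := by rw [hz1, hz2]; ring
      have hz10 : z₁ ≠ 0 := by
        intro h0; rw [h0, zero_mul] at hprod; exact zero_ne_one hprod
      have hz20 : z₂ ≠ 0 := by
        intro h0; rw [h0, mul_zero] at hprod; exact zero_ne_one hprod
      have habs : ‖z₁‖ * ‖z₂‖ = 1 := by
        rw [← norm_mul, hprod, norm_one]
      -- not both on the unit circle
      have hnot1 : ‖z₁‖ ≠ 1 := by
        intro h1
        have h2 : ‖z₂‖ = 1 := by nlinarith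
        -- then z₂ = conj z₁ and w is real in [-2,2], so v ∈ [0,c], contradiction
        have hinv : z₂ = (starRingEnd ℂ) z₁ := by
          have : z₂ = z₁⁻¹ := by
            field_simp [hz10] at hprod ⊢
            linear_combination hprod
          rw [this, Complex.inv_def, Complex.normSq_eq_norm_sq, h1]
          simp
        have hwre : w = ((2 * z₁.re : ℝ) : ℂ) := by
          rw [← hsum, hinv]
          simp [Complex.ext_iff, Complex.conj_re, Complex.conj_im]
          ring
        apply hv
        refine ⟨c / 4 * (2 * z₁.re + 2), ⟨?_, ?_⟩, ?_⟩
        · nlinarith [abs_le.mp (by rw [← h1]; exact Complex.abs_re_le_norm z₁ : |z₁.re| ≤ 1)]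
        · nlinarith [abs_le.mp (by rw [← h1]; exact Complex.abs_re_le_norm z₁ : |z₁.re| ≤ 1)]
        · rw [← hvw, hwre]
          push_cast
          ring
      by_cases h1 : 1 < ‖z₁‖
      · refine ⟨z₁, h1, ?_⟩
        have hinv : 1 / z₁ = z₂ :=
          (eq_one_div_of_mul_eq_one_left (by rw [mul_comm]; exact hprod)).symm
        show (c / 4 : ℂ) * (z₁ + 1 / z₁ + 2) = v
        rw [hinv]
        calc (c / 4 : ℂ) * (z₁ + z₂ + 2) = (c / 4 : ℂ) * (w + 2) := by rw [hsum]
          _ = v := hvw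
      · have h1' : ‖z₁‖ < 1 := lt_of_le_of_ne (not_lt.mp h1) hnot1
        have h2 : 1 < ‖z₂‖ := by
          by_contra h2'
          push_neg at h2'
          nlinarith [norm_nonneg z₁, norm_nonneg z₂]
        refine ⟨z₂, h2, ?_⟩
        have hinv : 1 / z₂ = z₁ :=
          (eq_one_div_of_mul_eq_one_left hprod).symm
        show (c / 4 : ℂ) * (z₂ + 1 / z₂ + 2) = v
        rw [hinv]
        calc (c / 4 : ℂ) * (z₂ + z₁ + 2) = (c / 4 : ℂ) * (w + 2) := by
              rw [← hsum]; ring_nf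
          _ = v := hvw
end

section
/- For any monic complex polynomial p of degree n ≥ 1, the set {z ∈ ℂ : |p(z)| ≤ 1} has at most n connected components, and each connected component contains at least one root of p. -/
open Set Filter Polynomial

/-- |p| has no local minimum at a non-root, for nonconstant p. -/
lemma not_isLocalMin_abs_eval (p : Polynomial ℂ) (hdeg : 1 ≤ p.natDegree) {c : ℂ}
    (hc : p.eval c ≠ 0) : ¬ IsLocalMin (fun z => ‖p.eval z‖) c := by
  intro h
  have hdiff : ∀ᶠ z in nhds c, DifferentiableAt ℂ (fun z => p.eval z) z :=
    Filter.Eventually.of_forall fun z => p.differentiableAt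
  have h' : IsLocalMin (norm ∘ fun z => p.eval z) c := by
    exact h
  rcases Complex.eventually_eq_or_eq_zero_of_isLocalMin_norm hdiff h' with hev | h0
  · -- p is eventually constant near c, so p is constant: contradiction
    have hq : p - Polynomial.C (p.eval c) = 0 := by
      apply Polynomial.eq_zero_of_infinite_isRoot
      apply Set.Infinite.mono (s := {z | p.eval z = p.eval c})
      · intro z hz
        simp only [Polynomial.IsRoot, Polynomial.eval_sub, Polynomial.eval_C, mem_setOf_eq]
        exact sub_eq_zero.mpr hz
      · exact infinite_of_mem_nhds c hev
    have : p = Polynomial.C (p.eval c) := by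
      have := sub_eq_zero.mp hq
      exact this
    have : p.natDegree = 0 := by rw [this]; simp
    omega
  · exact hc h0

theorem sublevel_at_most_n_components (p : Polynomial ℂ) (hp : p.Monic)
    (hdeg : 1 ≤ p.natDegree) :
    Set.ncard {C : Set ℂ | ∃ z ∈ {z : ℂ | ‖p.eval z‖ ≤ 1},
        C = connectedComponentIn {z : ℂ | ‖p.eval z‖ ≤ 1} z} ≤
      p.natDegree ∧
    ∀ z ∈ {z : ℂ | ‖p.eval z‖ ≤ 1},
      ∃ r ∈ connectedComponentIn {z : ℂ | ‖p.eval z‖ ≤ 1} z,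
        p.eval r = 0 := by
  set S : Set ℂ := {z : ℂ | ‖p.eval z‖ ≤ 1} with hS
  -- S is compact
  have hdeg' : 0 < p.degree := Polynomial.natDegree_pos_iff_degree_pos.mp hdeg
  have htend : Tendsto (fun z : ℂ => ‖p.eval z‖) (Bornology.cobounded ℂ) atTop := by
    have h1 := p.tendsto_norm_atTop hdeg' (z := (id : ℂ → ℂ))
      (l := Bornology.cobounded ℂ) tendsto_norm_cobounded_atTop
    simpa using h1
  have hSbdd : Bornology.IsBounded S := by
    rw [Bornology.isBounded_def]
    filter_upwards [htend.eventually_ge_atTop 2] with z hz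
    simp only [hS, mem_compl_iff, mem_setOf_eq, not_le]
    linarith
  have hSclosed : IsClosed S :=
    isClosed_le (continuous_norm.comp (p.continuous)) continuous_const
  have hScomp : IsCompact S := Metric.isCompact_of_isClosed_isBounded hSclosed hSbdd
  haveI : CompactSpace S := isCompact_iff_compactSpace.mp hScomp
  -- Part 2: every component contains a root
  have part2 : ∀ z ∈ S, ∃ r ∈ connectedComponentIn S z, p.eval r = 0 := by
    intro z hz
    by_contra hcon
    push_neg at hcon
    set x : S := ⟨z, hz⟩ with hx
    have hcomp : connectedComponentIn S z = Subtype.val '' connectedComponent x :=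
      connectedComponentIn_eq_image hz
    set U : Set S := {y : S | p.eval (y : ℂ) ≠ 0} with hU
    have hUopen : IsOpen U := by
      have : Continuous fun y : S => p.eval (y : ℂ) := p.continuous.comp continuous_subtype_val
      exact isOpen_ne.preimage this
    have hsub : connectedComponent x ⊆ U := by
      intro y hy
      exact hcon y.1 (hcomp ▸ mem_image_of_mem _ hy)
    -- find a clopen set V with x ∈ V ⊆ U
    obtain ⟨V, hVclopen, hxV, hVU⟩ : ∃ V : Set S, IsClopen V ∧ x ∈ V ∧ V ⊆ U := by
      let N := { s : Set S // IsClopen s ∧ x ∈ s }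
      haveI : Nonempty N := ⟨⟨univ, isClopen_univ, mem_univ x⟩⟩
      have hNcl : ∀ s : N, IsClosed s.val := fun s => s.property.1.1
      have hdir : Directed (· ⊇ ·) fun s : N => s.val := by
        rintro ⟨s, hs, hxs⟩ ⟨t, ht, hxt⟩
        exact ⟨⟨s ∩ t, hs.inter ht, ⟨hxs, hxt⟩⟩, inter_subset_left, inter_subset_right⟩
      have h_nhd : ∀ y ∈ ⋂ s : N, s.val, U ∈ nhds y := fun y y_in => by
        rw [← connectedComponent_eq_iInter_isClopen] at y_in
        exact hUopen.mem_nhds (hsub y_in)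
      obtain ⟨s, hsU⟩ := exists_subset_nhds_of_compactSpace hdir hNcl h_nhd
      exact ⟨s.val, s.2.1, s.2.2, hsU⟩
    -- minimize |p| on V
    have hVcomp : IsCompact V := hVclopen.1.isCompact
    have hVne : V.Nonempty := ⟨x, hxV⟩
    have hcont : ContinuousOn (fun y : S => ‖p.eval (y : ℂ)‖) V :=
      (continuous_norm.comp (p.continuous.comp continuous_subtype_val)).continuousOn
    obtain ⟨y₀, hy₀V, hy₀min⟩ := hVcomp.exists_isMinOn hVne hcont
    have hy₀ne : p.eval (y₀ : ℂ) ≠ 0 := hVU hy₀V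
    -- V is open in S: get an open set O in ℂ
    obtain ⟨O, hOopen, hOV⟩ := isOpen_induced_iff.mp hVclopen.2
    have hy₀O : (y₀ : ℂ) ∈ O := by
      have : y₀ ∈ (Subtype.val ⁻¹' O : Set S) := hOV ▸ hy₀V
      exact this
    -- |p| has no local min at y₀
    have hnotmin := not_isLocalMin_abs_eval p hdeg hy₀ne
    have hfreq : ∃ᶠ w in nhds (y₀ : ℂ), ‖p.eval w‖ < ‖p.eval (y₀ : ℂ)‖ := by
      rw [IsLocalMin, IsMinFilter] at hnotmin
      simpa [not_le] using hnotmin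
    obtain ⟨w, hwlt, hwO⟩ := (hfreq.and_eventually (hOopen.mem_nhds hy₀O)).exists
    have hwS : w ∈ S := by
      have hy₀S : ‖p.eval (y₀ : ℂ)‖ ≤ 1 := y₀.2
      exact le_of_lt (lt_of_lt_of_le hwlt hy₀S)
    have hwV : (⟨w, hwS⟩ : S) ∈ V := by
      rw [← hOV]; exact hwO
    have := hy₀min hwV
    simp only [mem_setOf_eq] at this
    exact absurd hwlt (not_lt.mpr this)
  refine ⟨?_, part2⟩
  -- Part 1: counting
  set R : Set ℂ := {r : ℂ | p.eval r = 0} with hR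
  have hRfin : R.Finite := Polynomial.finite_setOf_isRoot hp.ne_zero
  have hRcard : R.ncard ≤ p.natDegree := by
    have h1 : R = ↑(p.roots.toFinset) := by
      ext r
      simp [hR, Polynomial.mem_roots, hp.ne_zero, Polynomial.IsRoot]
    rw [h1, Set.ncard_coe_finset]
    exact le_trans (p.roots.toFinset_card_le) (Polynomial.card_roots' p)
  classical
  set f : Set ℂ → ℂ := fun C => if h : ∃ r ∈ C, p.eval r = 0 then h.choose else 0 with hf
  have hfspec : ∀ C ∈ {C : Set ℂ | ∃ z ∈ S, C = connectedComponentIn S z},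
      f C ∈ C ∧ p.eval (f C) = 0 := by
    rintro C ⟨z, hz, rfl⟩
    have h : ∃ r ∈ connectedComponentIn S z, p.eval r = 0 := part2 z hz
    rw [hf]
    simp only [dif_pos h]
    exact ⟨h.choose_spec.1, h.choose_spec.2⟩
  refine le_trans (Set.ncard_le_ncard_of_injOn f (fun C hC => (hfspec C hC).2) ?_ hRfin) hRcard
  rintro C hC C' hC' hff
  obtain ⟨z, hz, rfl⟩ := hC
  obtain ⟨z', hz', rfl⟩ := hC'
  have h1 := hfspec _ ⟨z, hz, rfl⟩
  have h2 := hfspec _ ⟨z', hz', rfl⟩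
  have e1 : connectedComponentIn S z = connectedComponentIn S (f (connectedComponentIn S z)) :=
    connectedComponentIn_eq h1.1
  have e2 : connectedComponentIn S z' = connectedComponentIn S (f (connectedComponentIn S z')) :=
    connectedComponentIn_eq h2.1
  rw [e1, e2, hff]
end

section
/- For every n ≥ 1, the set {z ∈ ℂ : |z^n - 1| ≤ 1} is connected. -/
lemma aux_scale (w : ℂ) (t : ℝ) (ht0 : 0 ≤ t) (ht1 : t ≤ 1)
    (hw : ‖w - 1‖ ≤ 1) : ‖(t : ℂ) * w - 1‖ ≤ 1 := by
  have h1 : Complex.normSq (w - 1) ≤ 1 := by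
    have := Complex.sq_norm (w - 1)
    nlinarith [norm_nonneg (w - 1)]
  have h2 : Complex.normSq ((t : ℂ) * w - 1) ≤ 1 := by
    simp only [Complex.normSq_apply, Complex.sub_re, Complex.sub_im, Complex.mul_re,
      Complex.mul_im, Complex.ofReal_re, Complex.ofReal_im, Complex.one_re,
      Complex.one_im] at h1 ⊢
    nlinarith [sq_nonneg (w.re), sq_nonneg (w.im), mul_self_nonneg t,
      mul_le_of_le_one_left ht0 ht1, sq_nonneg (t * w.re - 1)]
  calc ‖(t : ℂ) * w - 1‖ = Real.sqrt (Complex.normSq ((t : ℂ) * w - 1)) := by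
        rw [Complex.norm_def]
    _ ≤ Real.sqrt 1 := Real.sqrt_le_sqrt h2
    _ = 1 := Real.sqrt_one

theorem lemniscate_level_one_connected (n : ℕ) (hn : 1 ≤ n) :
    IsConnected {z : ℂ | ‖z ^ n - 1‖ ≤ 1} := by
  have h0 : (0 : ℂ) ∈ {z : ℂ | ‖z ^ n - 1‖ ≤ 1} := by
    simp [zero_pow (by omega : n ≠ 0)]
  refine ⟨⟨0, h0⟩, isPreconnected_of_forall 0 ?_⟩
  intro z hz
  refine ⟨segment ℝ 0 z, ?_, left_mem_segment ℝ 0 z, right_mem_segment ℝ 0 z,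
    (convex_segment (0 : ℂ) z).isPreconnected⟩
  intro y hy
  obtain ⟨a, b, ha, hb, hab, hy⟩ := hy
  have hb1 : b ≤ 1 := by linarith
  have hyz : y = (b : ℂ) * z := by
    rw [← hy]; simp [Complex.real_smul]
  simp only [Set.mem_setOf_eq] at hz ⊢
  rw [hyz]
  have hpow : ((b : ℂ) * z) ^ n = ((b ^ n : ℝ) : ℂ) * z ^ n := by push_cast; ring
  rw [hpow]
  exact aux_scale (z ^ n) (b ^ n) (pow_nonneg hb n) (pow_le_one₀ hb hb1) hz
end

section
/- Assuming the Hilbert Lemniscate Theorem (for any compact K ⊂ ℂ with connected complement and any ε > 0 there is a polynomial q with K ⊆ {z : |q(z)| ≤ sup_K |q|} ⊆ {z : dist(z,K) ≤ ε}) and the capacity rescaling argument, for every 0 < c < 4 and N ∈ ℕ there exists a monic polynomial p(z) = z^n + a_{n-1}z^{n-1} + ... + a_0 such that {z ∈ ℂ : |p(z)| ≤ 1} has at least N connected components each of diameter at least c. -/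
open Polynomial

lemma erdos511_prod_swap {ι : Type*} (F : Finset ι) (f : ι → ℂ → ℝ) (R : Multiset ℂ) :
    ∏ k ∈ F, (R.map (f k)).prod = (R.map (fun z => ∏ k ∈ F, f k z)).prod := by
  induction R using Multiset.induction_on with
  | empty => simp
  | cons z R ih =>
      simp only [Multiset.map_cons, Multiset.prod_cons, ← ih, Finset.prod_mul_distrib]

lemma erdos511_prod_map_le (R : Multiset ℂ) (f g : ℂ → ℝ)
    (h0 : ∀ z ∈ R, 0 ≤ f z) (h1 : ∀ z ∈ R, f z ≤ g z) :
    (R.map f).prod ≤ (R.map g).prod := by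
  induction R using Multiset.induction_on with
  | empty => simp
  | cons z R ih =>
      simp only [Multiset.map_cons, Multiset.prod_cons]
      have hf : 0 ≤ (Multiset.map f R).prod := by
        apply Multiset.prod_nonneg
        intro a ha
        obtain ⟨b, hb, rfl⟩ := Multiset.mem_map.mp ha
        exact h0 b (Multiset.mem_cons_of_mem hb)
      have := ih (fun w hw => h0 w (Multiset.mem_cons_of_mem hw))
        (fun w hw => h1 w (Multiset.mem_cons_of_mem hw))
      have hfz : 0 ≤ f z := h0 z (Multiset.mem_cons_self z R)
      have hfg : f z ≤ g z := h1 z (Multiset.mem_cons_self z R)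
      nlinarith [Multiset.prod_nonneg (s := Multiset.map g R) (fun a ha => by
        obtain ⟨b, hb, rfl⟩ := Multiset.mem_map.mp ha
        exact (h0 b (Multiset.mem_cons_of_mem hb)).trans (h1 b (Multiset.mem_cons_of_mem hb)))]

/-- Capacity-type bound: if all roots of `G` lie in the closed disc of radius `r` and
`|G| ≥ s` on the circle of radius `r`, then `s ≤ |lead G| * r ^ deg G`. -/
lemma erdos511_capacity (G : Polynomial ℂ) (hG : G ≠ 0) (r s : ℝ) (hr : 0 < r) (hs : 0 ≤ s)
    (hroots : ∀ z ∈ G.roots, ‖z‖ ≤ r)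
    (hcirc : ∀ u : ℂ, ‖u‖ = r → s ≤ ‖G.eval u‖) :
    s ≤ ‖G.leadingCoeff‖ * r ^ G.natDegree := by
  set a := G.leadingCoeff with ha
  set m := G.natDegree with hm
  have hane : a ≠ 0 := leadingCoeff_ne_zero.mpr hG
  have haabs : 0 < ‖a‖ := by
    simpa using (norm_pos_iff.mpr hane)
  have hcard : Multiset.card G.roots = m :=
    (Polynomial.splits_iff_card_roots).mp (IsAlgClosed.splits G)
  have hfact : Polynomial.C a * (Multiset.map (fun z => X - C z) G.roots).prod = G :=
    Polynomial.C_leadingCoeff_mul_prod_multiset_X_sub_C hcard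
  -- key: for each K ≥ 1, s ^ K ≤ |a| ^ K * (2 * r ^ K) ^ m
  have key : ∀ K : ℕ, 0 < K → s ^ K ≤ (‖a‖) ^ K * (2 * r ^ K) ^ m := by
    intro K hK
    have hprim : IsPrimitiveRoot (Complex.exp (2 * Real.pi * Complex.I / K)) K :=
      Complex.isPrimitiveRoot_exp K hK.ne'
    set F := Polynomial.nthRootsFinset K (1:ℂ) with hF
    have hcardF : F.card = K := hprim.card_nthRootsFinset
    have habsμ : ∀ μ ∈ F, ‖μ‖ = 1 := by
      intro μ hμ
      exact Complex.norm_eq_one_of_pow_eq_one ((Polynomial.mem_nthRootsFinset hK 1).mp hμ) hK.ne'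
    -- each circle point bound
    have h1 : s ^ K ≤ ∏ μ ∈ F, ‖G.eval (r * μ)‖ := by
      calc s ^ K = ∏ _μ ∈ F, s := by rw [Finset.prod_const, hcardF]
      _ ≤ _ := by
          apply Finset.prod_le_prod (fun _ _ => hs)
          intro μ hμ
          apply hcirc
          rw [norm_mul, habsμ μ hμ, mul_one, Complex.norm_real, Real.norm_eq_abs, abs_of_pos hr]
    -- factor the product
    have h2 : ∀ v : ℂ, ‖G.eval v‖
        = ‖a‖ * (Multiset.map (fun z => ‖v - z‖) G.roots).prod := by
      intro v
      conv_lhs => rw [← hfact]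
      rw [eval_mul, eval_C, norm_mul]
      congr 1
      generalize G.roots = R
      induction R using Multiset.induction_on with
      | empty => simp
      | cons z R ih => simp_all [Function.comp_def]
    have h3 : ∏ μ ∈ F, ‖G.eval (r * μ)‖
        = (‖a‖) ^ K *
          (Multiset.map (fun z => ∏ μ ∈ F, ‖(r : ℂ) * μ - z‖) G.roots).prod := by
      simp only [h2]
      rw [Finset.prod_mul_distrib, Finset.prod_const, hcardF,
        erdos511_prod_swap F (fun μ z => ‖(r : ℂ) * μ - z‖) G.roots]
    -- per-root bound
    have h4 : ∀ z ∈ G.roots, ∏ μ ∈ F, ‖(r : ℂ) * μ - z‖ ≤ 2 * r ^ K := by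
      intro z hz
      have hzr := hroots z hz
      have hid : ∏ μ ∈ F, (z - μ * (r : ℂ)) = z ^ K - (r : ℂ) ^ K :=
        (IsPrimitiveRoot.pow_sub_pow_eq_prod_sub_mul z (r : ℂ) hK hprim).symm
      have : ∏ μ ∈ F, ‖(r : ℂ) * μ - z‖
          = ‖z ^ K - (r : ℂ) ^ K‖ := by
        have e1 : ∀ μ ∈ F, ‖(r:ℂ) * μ - z‖ = ‖z - μ * (r:ℂ)‖ := by
          intro μ _
          rw [mul_comm μ (r:ℂ)]
          exact norm_sub_rev _ _
        rw [Finset.prod_congr rfl e1, ← norm_prod, hid]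
      rw [this]
      calc ‖z ^ K - (r : ℂ) ^ K‖
          ≤ ‖z ^ K‖ + ‖(r : ℂ) ^ K‖ := by
            exact norm_sub_le _ _
        _ ≤ r ^ K + r ^ K := by
            gcongr
            · rw [norm_pow]
              exact pow_le_pow_left₀ (norm_nonneg _) hzr K
            · rw [norm_pow, Complex.norm_real, Real.norm_eq_abs, abs_of_pos hr]
        _ = 2 * r ^ K := by ring
    have h5 : (Multiset.map (fun z => ∏ μ ∈ F, ‖(r : ℂ) * μ - z‖) G.roots).prod
        ≤ (Multiset.map (fun _ => 2 * r ^ K) G.roots).prod := by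
      apply erdos511_prod_map_le
      · intro z _
        exact Finset.prod_nonneg (fun μ _ => norm_nonneg _)
      · exact h4
    have h6 : (Multiset.map (fun _ : ℂ => 2 * r ^ K) G.roots).prod = (2 * r ^ K) ^ m := by
      rw [Multiset.map_const', Multiset.prod_replicate, hcard]
    calc s ^ K ≤ ∏ μ ∈ F, ‖G.eval (r * μ)‖ := h1
      _ = _ := h3
      _ ≤ (‖a‖) ^ K * (2 * r ^ K) ^ m := by
          rw [← h6]
          exact mul_le_mul_of_nonneg_left h5 (pow_nonneg (norm_nonneg _) K)
  -- now the limit argument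
  by_contra hcon
  push_neg at hcon
  set B := ‖a‖ * r ^ m with hB
  have hBpos : 0 < B := mul_pos haabs (pow_pos hr m)
  have hratio : 1 < s / B := (one_lt_div hBpos).mpr hcon
  obtain ⟨K, hKgt⟩ := pow_unbounded_of_one_lt ((2:ℝ) ^ m) hratio
  have hKpos : 0 < K := by
    rcases Nat.eq_zero_or_pos K with h0 | h
    · exfalso
      rw [h0, pow_zero] at hKgt
      have : (1:ℝ) ≤ 2 ^ m := one_le_pow₀ (by norm_num : (1:ℝ) ≤ 2)
      linarith
    · exact h
  have hkey := key K hKpos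
  have hexp : (‖a‖) ^ K * (2 * r ^ K) ^ m = B ^ K * 2 ^ m := by
    rw [hB, mul_pow, mul_pow, ← pow_mul, ← pow_mul, Nat.mul_comm m K]
    ring
  rw [hexp] at hkey
  have h2 : (s / B) ^ K ≤ 2 ^ m := by
    rw [div_pow, div_le_iff₀ (pow_pos hBpos K)]
    linarith [hkey]
  linarith

open Polynomial

noncomputable def erdos511G (q : Polynomial ℂ) (b : ℂ) : Polynomial ℂ :=
  ∑ i ∈ Finset.range (q.natDegree + 1),
    Polynomial.C (q.coeff i) * (Polynomial.X ^ 2 + Polynomial.C b) ^ i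
      * Polynomial.X ^ (q.natDegree - i)

lemma erdos511G_eval (q : Polynomial ℂ) (b : ℂ) (u : ℂ) (hu : u ≠ 0) :
    (erdos511G q b).eval u = u ^ q.natDegree * q.eval (u + b / u) := by
  rw [erdos511G, Polynomial.eval_finset_sum, Polynomial.eval_eq_sum_range (p := q) (u + b / u),
    Finset.mul_sum]
  apply Finset.sum_congr rfl
  intro i hi
  have hin : i ≤ q.natDegree := Nat.lt_succ_iff.mp (Finset.mem_range.mp hi)
  simp only [eval_mul, eval_pow, eval_add, eval_C, eval_X]
  have hψ : (u ^ 2 + b) = (u + b / u) * u := by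
    field_simp
  rw [hψ, mul_pow]
  have : u ^ i * u ^ (q.natDegree - i) = u ^ q.natDegree := by
    rw [← pow_add]
    congr 1
    omega
  rw [show q.coeff i * ((u + b / u) ^ i * u ^ i) * u ^ (q.natDegree - i)
      = q.coeff i * (u + b / u) ^ i * (u ^ i * u ^ (q.natDegree - i)) from by ring, this]
  ring

lemma erdos511G_coeff_top (q : Polynomial ℂ) (b : ℂ) :
    (erdos511G q b).coeff (2 * q.natDegree) = q.leadingCoeff := by
  rw [erdos511G, Polynomial.finset_sum_coeff]
  rw [Finset.sum_eq_single q.natDegree]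
  · have hmon : ((Polynomial.X ^ 2 + Polynomial.C b : Polynomial ℂ) ^ q.natDegree).Monic :=
      (Polynomial.monic_X_pow_add_C b (two_ne_zero)).pow _
    have hdeg : ((Polynomial.X ^ 2 + Polynomial.C b : Polynomial ℂ) ^ q.natDegree).natDegree
        = 2 * q.natDegree := by
      rw [Polynomial.natDegree_pow, Polynomial.natDegree_X_pow_add_C]
      ring
    rw [Nat.sub_self, pow_zero, mul_one, Polynomial.coeff_C_mul, ← hdeg,
      hmon.coeff_natDegree, mul_one, Polynomial.leadingCoeff]
  · intro i hi hine
    have hin : i ≤ q.natDegree := Nat.lt_succ_iff.mp (Finset.mem_range.mp hi)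
    have hilt : i < q.natDegree := lt_of_le_of_ne hin hine
    apply Polynomial.coeff_eq_zero_of_natDegree_lt
    calc (Polynomial.C (q.coeff i) * (Polynomial.X ^ 2 + Polynomial.C b) ^ i
          * Polynomial.X ^ (q.natDegree - i)).natDegree
        ≤ (Polynomial.C (q.coeff i) * (Polynomial.X ^ 2 + Polynomial.C b) ^ i).natDegree
          + (Polynomial.X ^ (q.natDegree - i) : Polynomial ℂ).natDegree :=
          Polynomial.natDegree_mul_le
      _ ≤ ((Polynomial.C (q.coeff i)).natDegree
            + ((Polynomial.X ^ 2 + Polynomial.C b) ^ i).natDegree)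
          + (Polynomial.X ^ (q.natDegree - i) : Polynomial ℂ).natDegree := by
          gcongr
          exact Polynomial.natDegree_mul_le
      _ ≤ (0 + 2 * i) + (q.natDegree - i) := by
          gcongr
          · simp
          · rw [Polynomial.natDegree_pow, Polynomial.natDegree_X_pow_add_C]; omega
          · simp [Polynomial.natDegree_X_pow]
      _ < 2 * q.natDegree := by omega
  · intro h
    exact absurd (Finset.self_mem_range_succ q.natDegree) h

lemma erdos511G_natDegree_le (q : Polynomial ℂ) (b : ℂ) :
    (erdos511G q b).natDegree ≤ 2 * q.natDegree := by
  rw [erdos511G]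
  apply Polynomial.natDegree_sum_le_of_forall_le
  intro i hi
  have hin : i ≤ q.natDegree := Nat.lt_succ_iff.mp (Finset.mem_range.mp hi)
  calc (Polynomial.C (q.coeff i) * (Polynomial.X ^ 2 + Polynomial.C b) ^ i
        * Polynomial.X ^ (q.natDegree - i)).natDegree
      ≤ (Polynomial.C (q.coeff i) * (Polynomial.X ^ 2 + Polynomial.C b) ^ i).natDegree
        + (Polynomial.X ^ (q.natDegree - i) : Polynomial ℂ).natDegree :=
        Polynomial.natDegree_mul_le
    _ ≤ ((Polynomial.C (q.coeff i)).natDegree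
          + ((Polynomial.X ^ 2 + Polynomial.C b) ^ i).natDegree)
        + (Polynomial.X ^ (q.natDegree - i) : Polynomial ℂ).natDegree := by
        gcongr
        exact Polynomial.natDegree_mul_le
    _ ≤ (0 + 2 * i) + (q.natDegree - i) := by
        gcongr
        · simp
        · rw [Polynomial.natDegree_pow, Polynomial.natDegree_X_pow_add_C]; omega
        · simp [Polynomial.natDegree_X_pow]
    _ ≤ 2 * q.natDegree := by omega

lemma erdos511G_eval_zero (q : Polynomial ℂ) (b : ℂ) :
    (erdos511G q b).eval 0 = q.leadingCoeff * b ^ q.natDegree := by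
  rw [erdos511G, Polynomial.eval_finset_sum, Finset.sum_eq_single q.natDegree]
  · rw [Nat.sub_self, pow_zero, Polynomial.eval_mul, Polynomial.eval_mul, Polynomial.eval_pow,
      Polynomial.eval_add, Polynomial.eval_pow, Polynomial.eval_C, Polynomial.eval_C,
      Polynomial.eval_X, Polynomial.eval_one]
    rw [Polynomial.coeff_natDegree]
    norm_num
  · intro i hi hine
    have hin : i ≤ q.natDegree := Nat.lt_succ_iff.mp (Finset.mem_range.mp hi)
    have h0 : q.natDegree - i ≠ 0 := by omega
    rw [Polynomial.eval_mul, Polynomial.eval_pow, Polynomial.eval_X, zero_pow h0, mul_zero]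
  · intro h
    exact absurd (Finset.self_mem_range_succ q.natDegree) h

set_option maxHeartbeats 1000000 in
lemma erdos511_geom (r0 r1 ρ : ℝ) (h0 : 0 < r0) (h01 : r0 < r1) (hρ : 0 ≤ ρ)
    (hkey : (2*r0 + ρ)^2 * r1^2 * (r1^2 - r0^2)^2 + ρ^2 * r1^2 * (r1^2 + r0^2)^2
      < (r1^2 + r0^2)^2 * (r1^2 - r0^2)^2)
    (u : ℂ) (hu : r1 ≤ ‖u‖)
    (hre : |(u + ((r0^2 : ℝ) : ℂ)/u).re| ≤ 2*r0 + ρ)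
    (him : |(u + ((r0^2 : ℝ) : ℂ)/u).im| ≤ ρ) : False := by
  have hr1 : 0 < r1 := h0.trans h01
  set s := ‖u‖ with hs
  have hspos : 0 < s := lt_of_lt_of_le hr1 hu
  have hune : u ≠ 0 := by
    intro h
    rw [h] at hs
    simp at hs
    exact absurd hs (ne_of_gt hspos)
  have hnormSq : Complex.normSq u = s ^ 2 := (Complex.sq_norm u).symm
  have hs2 : u.re ^ 2 + u.im ^ 2 = s ^ 2 := by
    rw [← hnormSq, Complex.normSq_apply]
    ring
  have hre' : (u + ((r0^2 : ℝ) : ℂ)/u).re = u.re + r0^2 * u.re / s^2 := by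
    rw [Complex.add_re, Complex.div_re, hnormSq]
    simp [← Complex.ofReal_pow]
  have him' : (u + ((r0^2 : ℝ) : ℂ)/u).im = u.im - r0^2 * u.im / s^2 := by
    rw [Complex.add_im, Complex.div_im, hnormSq]
    simp [← Complex.ofReal_pow]
    ring
  set x := u.re
  set y := u.im
  set X0 := 2*r0 + ρ with hX0
  have hX0nn : 0 ≤ X0 := by positivity
  have hx2 : x^2 * (s^2 + r0^2)^2 ≤ X0^2 * s^4 := by
    have h1 : |x + r0^2 * x / s^2| ≤ X0 := by rw [← hre']; exact hre
    have h2 : |x * (s^2 + r0^2)| ≤ X0 * s^2 := by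
      have he : x * (s^2 + r0^2) = (x + r0^2 * x / s^2) * s^2 := by
        field_simp
      rw [he, abs_mul, abs_of_pos (by positivity : (0:ℝ) < s^2)]
      exact mul_le_mul_of_nonneg_right h1 (by positivity)
    have h3 := mul_self_le_mul_self (abs_nonneg _) h2
    nlinarith [h3, sq_abs (x * (s^2 + r0^2))]
  have hy2 : y^2 * (s^2 - r0^2)^2 ≤ ρ^2 * s^4 := by
    have h1 : |y - r0^2 * y / s^2| ≤ ρ := by rw [← him']; exact him
    have h2 : |y * (s^2 - r0^2)| ≤ ρ * s^2 := by
      have he : y * (s^2 - r0^2) = (y - r0^2 * y / s^2) * s^2 := by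
        field_simp
      rw [he, abs_mul, abs_of_pos (by positivity : (0:ℝ) < s^2)]
      exact mul_le_mul_of_nonneg_right h1 (by positivity)
    have h3 := mul_self_le_mul_self (abs_nonneg _) h2
    nlinarith [h3, sq_abs (y * (s^2 - r0^2))]
  have hsr0 : r0 < s := h01.trans_le hu
  have hma : (r1^2 + r0^2) * s ≤ r1 * (s^2 + r0^2) := by
    nlinarith [mul_nonneg (sub_nonneg.mpr hu) (show (0:ℝ) ≤ r1*s - r0^2 by nlinarith)]
  have hmb : (r1^2 - r0^2) * s ≤ r1 * (s^2 - r0^2) := by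
    nlinarith [mul_nonneg (sub_nonneg.mpr hu) (show (0:ℝ) ≤ r1*s + r0^2 by nlinarith)]
  have ha1nn : (0:ℝ) ≤ (r1^2 + r0^2) * s := by positivity
  have hb1nn : (0:ℝ) ≤ (r1^2 - r0^2) * s :=
    mul_nonneg (by nlinarith) hspos.le
  have q1 : ((r1^2 + r0^2) * s)^2 ≤ (r1 * (s^2 + r0^2))^2 := by
    exact pow_le_pow_left₀ ha1nn hma 2
  have q2 : ((r1^2 - r0^2) * s)^2 ≤ (r1 * (s^2 - r0^2))^2 := by
    exact pow_le_pow_left₀ hb1nn hmb 2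
  have e1 : x^2 * ((r1^2 + r0^2) * s)^2 ≤ r1^2 * (X0^2 * s^4) := by
    calc x^2 * ((r1^2 + r0^2) * s)^2 ≤ x^2 * (r1 * (s^2 + r0^2))^2 :=
          mul_le_mul_of_nonneg_left q1 (sq_nonneg x)
      _ = r1^2 * (x^2 * (s^2 + r0^2)^2) := by ring
      _ ≤ r1^2 * (X0^2 * s^4) := mul_le_mul_of_nonneg_left hx2 (sq_nonneg r1)
  have e2 : y^2 * ((r1^2 - r0^2) * s)^2 ≤ r1^2 * (ρ^2 * s^4) := by
    calc y^2 * ((r1^2 - r0^2) * s)^2 ≤ y^2 * (r1 * (s^2 - r0^2))^2 :=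
          mul_le_mul_of_nonneg_left q2 (sq_nonneg y)
      _ = r1^2 * (y^2 * (s^2 - r0^2)^2) := by ring
      _ ≤ r1^2 * (ρ^2 * s^4) := mul_le_mul_of_nonneg_left hy2 (sq_nonneg r1)
  have e1' := mul_le_mul_of_nonneg_right e1 (sq_nonneg (r1^2 - r0^2))
  have e2' := mul_le_mul_of_nonneg_right e2 (sq_nonneg (r1^2 + r0^2))
  have eid : x^2 * ((r1^2 + r0^2) * s)^2 * (r1^2 - r0^2)^2
      + y^2 * ((r1^2 - r0^2) * s)^2 * (r1^2 + r0^2)^2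
      = (x^2 + y^2) * ((r1^2 + r0^2)^2 * (r1^2 - r0^2)^2 * s^2) := by ring
  have hsum : x^2 + y^2 = s^2 := hs2
  have e3 : s^2 * ((r1^2 + r0^2)^2 * (r1^2 - r0^2)^2 * s^2)
      ≤ r1^2 * (X0^2 * s^4) * (r1^2 - r0^2)^2 + r1^2 * (ρ^2 * s^4) * (r1^2 + r0^2)^2 := by
    calc s^2 * ((r1^2 + r0^2)^2 * (r1^2 - r0^2)^2 * s^2)
        = (x^2 + y^2) * ((r1^2 + r0^2)^2 * (r1^2 - r0^2)^2 * s^2) := by rw [hsum]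
      _ = x^2 * ((r1^2 + r0^2) * s)^2 * (r1^2 - r0^2)^2
          + y^2 * ((r1^2 - r0^2) * s)^2 * (r1^2 + r0^2)^2 := eid.symm
      _ ≤ _ := add_le_add e1' e2'
  have hs4 : (0:ℝ) < s^4 := by positivity
  have efin : (r1^2 + r0^2)^2 * (r1^2 - r0^2)^2 * s^4
      ≤ (X0^2 * r1^2 * (r1^2 - r0^2)^2 + ρ^2 * r1^2 * (r1^2 + r0^2)^2) * s^4 := by
    calc (r1^2 + r0^2)^2 * (r1^2 - r0^2)^2 * s^4
        = s^2 * ((r1^2 + r0^2)^2 * (r1^2 - r0^2)^2 * s^2) := by ring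
      _ ≤ r1^2 * (X0^2 * s^4) * (r1^2 - r0^2)^2 + r1^2 * (ρ^2 * s^4) * (r1^2 + r0^2)^2 := e3
      _ = (X0^2 * r1^2 * (r1^2 - r0^2)^2 + ρ^2 * r1^2 * (r1^2 + r0^2)^2) * s^4 := by ring
  have := le_of_mul_le_mul_right (by linarith [efin] :
      (r1^2 + r0^2)^2 * (r1^2 - r0^2)^2 * s^4
        ≤ (X0^2 * r1^2 * (r1^2 - r0^2)^2 + ρ^2 * r1^2 * (r1^2 + r0^2)^2) * s^4) hs4
  rw [hX0] at this hkey
  linarith [hkey, this]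

lemma erdos511_memK (r0 δ : ℝ) (hr0 : 0 < r0) (N : ℕ) (w : ℂ) :
    w ∈ (⋃ k : Fin N, segment ℝ ((⟨-(2*r0), k*δ⟩ : ℂ)) ((⟨2*r0, k*δ⟩ : ℂ)))
      ↔ ∃ k : Fin N, w.im = k*δ ∧ |w.re| ≤ 2*r0 := by
  constructor
  · intro hw
    obtain ⟨k, hk⟩ := Set.mem_iUnion.mp hw
    refine ⟨k, ?_⟩
    rw [segment_eq_image] at hk
    obtain ⟨θ, hθ, rfl⟩ := hk
    obtain ⟨hθ0, hθ1⟩ := hθ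
    constructor
    · simp only [Complex.add_im, Complex.real_smul, Complex.mul_im, Complex.ofReal_re,
        Complex.ofReal_im]
      ring
    · simp only [Complex.add_re, Complex.real_smul, Complex.mul_re, Complex.ofReal_re,
        Complex.ofReal_im]
      rw [abs_le]
      constructor <;> nlinarith
  · rintro ⟨k, him, hre⟩
    apply Set.mem_iUnion.mpr
    refine ⟨k, ?_⟩
    rw [segment_eq_image]
    refine ⟨(w.re + 2*r0)/(4*r0), ⟨?_, ?_⟩, ?_⟩
    · apply div_nonneg _ (by linarith)
      rw [abs_le] at hre
      linarith
    · rw [div_le_one (by linarith)]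
      rw [abs_le] at hre
      linarith
    · apply Complex.ext
      · simp only [Complex.add_re, Complex.real_smul, Complex.mul_re, Complex.ofReal_re,
          Complex.ofReal_im]
        field_simp
        ring
      · simp only [Complex.add_im, Complex.real_smul, Complex.mul_im, Complex.ofReal_re,
          Complex.ofReal_im, him]
        ring

lemma erdos511_conn (r0 δ : ℝ) (hr0 : 0 < r0) (hδ : 0 < δ) (N : ℕ) :
    IsConnected (⋃ k : Fin N, segment ℝ ((⟨-(2*r0), k*δ⟩ : ℂ)) ((⟨2*r0, k*δ⟩ : ℂ)))ᶜ := by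
  set K := (⋃ k : Fin N, segment ℝ ((⟨-(2*r0), k*δ⟩ : ℂ)) ((⟨2*r0, k*δ⟩ : ℂ))) with hK
  have hmem := erdos511_memK r0 δ hr0 N
  set PL : Set ℂ := {z | z.re < -(2*r0)} with hPL
  set PR : Set ℂ := {z | 2*r0 < z.re} with hPR
  set Bot : Set ℂ := {z | z.im < 0} with hBot
  set Top : Set ℂ := {z | ((N:ℝ)-1)*δ < z.im} with hTop
  set Mid : ℕ → Set ℂ := fun j => {z | ((j:ℝ)-1)*δ < z.im ∧ z.im < (j:ℝ)*δ} with hMid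
  set W : Set ℂ := (PL ∪ Bot) ∪ PR with hW
  have hPLK : PL ⊆ Kᶜ := by
    intro z hz
    simp only [Set.mem_compl_iff]
    rw [hmem]
    rintro ⟨k, _, hre⟩
    have : z.re < -(2*r0) := hz
    rw [abs_le] at hre
    linarith
  have hPRK : PR ⊆ Kᶜ := by
    intro z hz
    simp only [Set.mem_compl_iff]
    rw [hmem]
    rintro ⟨k, _, hre⟩
    have : 2*r0 < z.re := hz
    rw [abs_le] at hre
    linarith
  have hBotK : Bot ⊆ Kᶜ := by
    intro z hz
    simp only [Set.mem_compl_iff]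
    rw [hmem]
    rintro ⟨k, him, _⟩
    have h1 : z.im < 0 := hz
    have h2 : (0:ℝ) ≤ (k:ℝ)*δ := by positivity
    rw [him] at h1
    linarith
  have hTopK : Top ⊆ Kᶜ := by
    intro z hz
    simp only [Set.mem_compl_iff]
    rw [hmem]
    rintro ⟨k, him, _⟩
    have h1 : ((N:ℝ)-1)*δ < z.im := hz
    have hkN : (k:ℝ) ≤ (N:ℝ) - 1 := by
      have := k.2
      have : ((k:ℕ):ℝ) ≤ (N:ℝ) - 1 := by
        have hk1 : (k:ℕ) + 1 ≤ N := k.2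
        have := Nat.cast_le (α := ℝ) |>.mpr hk1
        push_cast at this
        linarith
      exact this
    have h2 : (k:ℝ)*δ ≤ ((N:ℝ)-1)*δ := by
      apply mul_le_mul_of_nonneg_right hkN hδ.le
    rw [him] at h1
    linarith
  have hMidK : ∀ j : ℕ, Mid j ⊆ Kᶜ := by
    intro j z hz
    simp only [Set.mem_compl_iff]
    rw [hmem]
    rintro ⟨k, him, _⟩
    obtain ⟨h1, h2⟩ := hz
    rw [him] at h1 h2
    have hkj : (k:ℕ) < j := by
      by_contra h
      push_neg at h
      have : (j:ℝ) ≤ (k:ℕ) := Nat.cast_le.mpr h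
      nlinarith
    have : ((k:ℕ):ℝ) ≤ (j:ℝ) - 1 := by
      have : (k:ℕ) + 1 ≤ j := hkj
      have := Nat.cast_le (α := ℝ) |>.mpr this
      push_cast at this
      linarith
    nlinarith
  have hWK : W ⊆ Kᶜ := by
    rw [hW]
    exact Set.union_subset (Set.union_subset hPLK hBotK) hPRK
  -- preconnectedness of pieces
  have hconvPL : Convex ℝ PL := convex_halfSpace_re_lt _
  have hconvPR : Convex ℝ PR := convex_halfSpace_re_gt _
  have hconvBot : Convex ℝ Bot := convex_halfSpace_im_lt _
  have hconvTop : Convex ℝ Top := convex_halfSpace_im_gt _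
  have hconvMid : ∀ j : ℕ, Convex ℝ (Mid j) := by
    intro j
    have : Mid j = {z : ℂ | ((j:ℝ)-1)*δ < z.im} ∩ {z : ℂ | z.im < (j:ℝ)*δ} := rfl
    rw [this]
    exact (convex_halfSpace_im_gt _).inter (convex_halfSpace_im_lt _)
  set pt : ℂ := ⟨-(2*r0+1), -1⟩ with hpt
  have hptPL : pt ∈ PL := by
    show pt.re < -(2*r0)
    rw [hpt]
    norm_num
  have hptBot : pt ∈ Bot := by
    show pt.im < 0
    rw [hpt]
    norm_num
  have hWpre : IsPreconnected W := by
    apply IsPreconnected.union ((⟨2*r0+1, -1⟩ : ℂ))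
    · exact Or.inr (show ((⟨2*r0+1, -1⟩ : ℂ)).im < (0:ℝ) by norm_num)
    · show 2*r0 < ((⟨2*r0+1, -1⟩ : ℂ)).re
      norm_num
    · apply IsPreconnected.union pt hptPL hptBot hconvPL.isPreconnected
        hconvBot.isPreconnected
    · exact hconvPR.isPreconnected
  have hMidWpre : ∀ j : ℕ, IsPreconnected (Mid j ∪ W) := by
    intro j
    apply IsPreconnected.union ((⟨-(2*r0+1), ((j:ℝ)-1)*δ + δ/2⟩ : ℂ))
    · constructor
      · show ((j:ℝ)-1)*δ < ((j:ℝ)-1)*δ + δ/2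
        linarith
      · show ((j:ℝ)-1)*δ + δ/2 < (j:ℝ)*δ
        linarith
    · left
      left
      show (-(2*r0+1) : ℝ) < -(2*r0)
      linarith
    · exact (hconvMid j).isPreconnected
    · exact hWpre
  have hTopWpre : IsPreconnected (Top ∪ W) := by
    apply IsPreconnected.union ((⟨-(2*r0+1), ((N:ℝ)-1)*δ + 1⟩ : ℂ))
    · show ((N:ℝ)-1)*δ < ((N:ℝ)-1)*δ + 1
      linarith
    · left
      left
      show (-(2*r0+1) : ℝ) < -(2*r0)
      linarith
    · exact hconvTop.isPreconnected
    · exact hWpre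
  -- the cover
  set c : Set (Set ℂ) := insert (Top ∪ W) ((fun j => Mid j ∪ W) '' (Set.Iic N)) with hc
  have hcover : ⋃₀ c = Kᶜ := by
    apply Set.Subset.antisymm
    · intro z hz
      obtain ⟨S, hS, hzS⟩ := hz
      rcases hS with rfl | ⟨j, _, rfl⟩
      · rcases hzS with h | h
        · exact hTopK h
        · exact hWK h
      · rcases hzS with h | h
        · exact hMidK j h
        · exact hWK h
    · intro z hz
      simp only [Set.mem_compl_iff] at hz
      rw [hmem] at hz
      push_neg at hz
      by_cases hcase : ∃ k : Fin N, z.im = (k:ℝ)*δ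
      · obtain ⟨k, hk⟩ := hcase
        have hre := hz k hk
        have hzW : z ∈ W := by
          rcases lt_abs.mp hre with h | h
          · exact Or.inr h
          · exact Or.inl (Or.inl (show z.re < -(2*r0) by linarith))
        exact ⟨Top ∪ W, Set.mem_insert _ _, Or.inr hzW⟩
      · push_neg at hcase
        by_cases h1 : z.im < 0
        · exact ⟨Top ∪ W, Set.mem_insert _ _, Or.inr (Or.inl (Or.inr h1))⟩
        by_cases h2 : ((N:ℝ)-1)*δ < z.im
        · exact ⟨Top ∪ W, Set.mem_insert _ _, Or.inl h2⟩
        push_neg at h1 h2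
        set j0 := Nat.floor (z.im / δ) with hj0
        have hdiv0 : 0 ≤ z.im / δ := div_nonneg h1 hδ.le
        have hfl : (j0:ℝ) ≤ z.im / δ := Nat.floor_le hdiv0
        have hfu : z.im / δ < (j0:ℝ) + 1 := Nat.lt_floor_add_one _
        have hl : (j0:ℝ)*δ ≤ z.im := by
          rw [← le_div_iff₀ hδ]
          exact hfl
        have hu : z.im < ((j0:ℝ)+1)*δ := by
          rw [← div_lt_iff₀ hδ]
          exact hfu
        have hj0N : j0 < N := by
          have hNd : (0:ℝ) ≤ ((N:ℝ)-1)*δ := le_trans h1 h2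
          have hN1 : (0:ℝ) ≤ (N:ℝ)-1 := by nlinarith
          have : (j0:ℝ) ≤ (N:ℝ)-1 := by
            calc (j0:ℝ) ≤ z.im / δ := hfl
              _ ≤ (N:ℝ)-1 := by
                rw [div_le_iff₀ hδ]
                linarith
          have : (j0:ℝ) < (N:ℝ) := by linarith
          exact_mod_cast this
        have hne : z.im ≠ (j0:ℝ)*δ := hcase ⟨j0, hj0N⟩
        have hls : (j0:ℝ)*δ < z.im := lt_of_le_of_ne hl (Ne.symm hne)
        refine ⟨Mid (j0+1) ∪ W, Set.mem_insert_of_mem _ ⟨j0+1, hj0N, rfl⟩, Or.inl ⟨?_, ?_⟩⟩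
        · push_cast
          linarith
        · push_cast
          linarith
  rw [← hcover]
  constructor
  · exact ⟨pt, ⟨Top ∪ W, Set.mem_insert _ _, Or.inr (Or.inl (Or.inl hptPL))⟩⟩
  · apply isPreconnected_sUnion pt c
    · intro S hS
      rcases hS with rfl | ⟨j, _, rfl⟩
      · exact Or.inr (Or.inl (Or.inl hptPL))
      · exact Or.inr (Or.inl (Or.inl hptPL))
    · intro S hS
      rcases hS with rfl | ⟨j, _, rfl⟩
      · exact hTopWpre
      · exact hMidWpre j

lemma erdos511_segment_isCompact (a b : ℂ) : IsCompact (segment ℝ a b) := by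
  rw [segment_eq_image]
  exact isCompact_Icc.image (by continuity)

lemma erdos511_segment_infinite (a b : ℂ) (h : a ≠ b) : (segment ℝ a b).Infinite := by
  rw [segment_eq_image]
  apply Set.Infinite.image _ (Set.Icc_infinite (by norm_num : (0:ℝ) < 1))
  intro s _ tt _ heq
  simp only [Complex.real_smul] at heq
  have hz : ((s:ℂ) - (tt:ℂ)) * (b - a) = 0 := by
    push_cast at heq ⊢
    linear_combination heq
  rcases mul_eq_zero.mp hz with h1 | h1
  · have : (s:ℂ) = (tt:ℂ) := by linear_combination h1
    exact_mod_cast this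
  · exact absurd (sub_eq_zero.mp h1).symm h

open Polynomial


set_option maxHeartbeats 2000000 in
theorem erdos_511 
    (hHLT : ∀ K : Set ℂ, IsCompact K → IsConnected Kᶜ → ∀ ε : ℝ, 0 < ε →
      ∃ q : Polynomial ℂ,
        K ⊆ {z : ℂ | ‖q.eval z‖ ≤
              sSup ((fun z => ‖q.eval z‖) '' K)} ∧
        {z : ℂ | ‖q.eval z‖ ≤
              sSup ((fun z => ‖q.eval z‖) '' K)} ⊆
          {z : ℂ | Metric.infDist z K ≤ ε}) :
    ∀ c : ℝ, 0 < c → c < 4 → ∀ N : ℕ,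
      ∃ p : Polynomial ℂ, p.Monic ∧
        ∃ zs : Fin N → ℂ,
          (∀ i, zs i ∈ {z : ℂ | ‖p.eval z‖ ≤ 1}) ∧
          (∀ i j, i ≠ j →
            connectedComponentIn {z : ℂ | ‖p.eval z‖ ≤ 1} (zs i) ≠
              connectedComponentIn {z : ℂ | ‖p.eval z‖ ≤ 1} (zs j)) ∧
          ∀ i, c ≤ Metric.diam
            (connectedComponentIn {z : ℂ | ‖p.eval z‖ ≤ 1} (zs i)) := by
  intro c hc hc4 N
  rcases Nat.eq_zero_or_pos N with rfl | hNpos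
  · exact ⟨Polynomial.X, Polynomial.monic_X, fun i => i.elim0, fun i => i.elim0,
      fun i j _ => i.elim0, fun i => i.elim0⟩
  -- constants
  set c0 : ℝ := (c+4)/2 with hc0def
  have hc0pos : 0 < c0 := by rw [hc0def]; linarith
  have hcc0 : c < c0 := by rw [hc0def]; linarith
  have hc04 : c0 < 4 := by rw [hc0def]; linarith
  set r0 : ℝ := c0/4 with hr0def
  have hr0pos : 0 < r0 := by rw [hr0def]; linarith
  have hr0c : r0 < c0/c := by
    rw [hr0def, div_lt_div_iff₀ (by norm_num) hc]
    nlinarith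
  set r1 : ℝ := (r0 + c0/c)/2 with hr1def
  have hr01 : r0 < r1 := by rw [hr1def]; linarith
  have hr1c : r1 < c0/c := by rw [hr1def]; linarith
  have hr1pos : 0 < r1 := hr0pos.trans hr01
  -- choose ρ
  obtain ⟨ρ, hρpos, hρkey⟩ : ∃ ρ : ℝ, 0 < ρ ∧
      (2*r0 + ρ)^2 * r1^2 * (r1^2 - r0^2)^2 + ρ^2 * r1^2 * (r1^2 + r0^2)^2
        < (r1^2 + r0^2)^2 * (r1^2 - r0^2)^2 := by
    have hcont : Continuous (fun x : ℝ =>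
        (2*r0 + x)^2 * r1^2 * (r1^2 - r0^2)^2 + x^2 * r1^2 * (r1^2 + r0^2)^2) := by
      fun_prop
    have hb : 0 < r1^2 - r0^2 := by nlinarith
    have h1 : 2*r0*r1 < r1^2 + r0^2 := by nlinarith [sq_nonneg (r1 - r0), sq_nonneg (r1-r0)]
    have hval : (2*r0 + 0)^2 * r1^2 * (r1^2 - r0^2)^2 + 0^2 * r1^2 * (r1^2 + r0^2)^2
        < (r1^2 + r0^2)^2 * (r1^2 - r0^2)^2 := by
      have h3 : (2*r0)^2 * r1^2 < (r1^2+r0^2)^2 := by nlinarith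
      nlinarith [pow_pos hb 2]
    have hev : ∀ᶠ x in nhds (0:ℝ), (fun x : ℝ =>
        (2*r0 + x)^2 * r1^2 * (r1^2 - r0^2)^2 + x^2 * r1^2 * (r1^2 + r0^2)^2) x
          < (r1^2 + r0^2)^2 * (r1^2 - r0^2)^2 :=
      Filter.Tendsto.eventually_lt_const hval (hcont.tendsto 0)
    have hev' := hev.filter_mono (nhdsWithin_le_nhds (s := Set.Ioi (0:ℝ)))
    obtain ⟨x, hx1, hx2⟩ := (hev'.and eventually_mem_nhdsWithin).exists
    exact ⟨x, hx2, hx1⟩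
  set δ : ℝ := ρ/(2*N) with hδdef
  have hNR : (1:ℝ) ≤ (N:ℝ) := by exact_mod_cast hNpos
  have hδpos : 0 < δ := by rw [hδdef]; apply div_pos hρpos; linarith
  have hδρ : δ ≤ ρ/2 := by
    rw [hδdef]
    apply div_le_div_of_nonneg_left hρpos.le (by norm_num)
    linarith
  set ε : ℝ := δ/4 with hεdef
  have hεpos : 0 < ε := by rw [hεdef]; linarith
  have hερ : ε ≤ ρ/2 := by rw [hεdef]; linarith
  -- the needles
  set Kset : Set ℂ :=
    ⋃ k : Fin N, segment ℝ ((⟨-(2*r0), k*δ⟩ : ℂ)) ((⟨2*r0, k*δ⟩ : ℂ)) with hKdef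
  have hKcomp : IsCompact Kset := isCompact_iUnion (fun k => erdos511_segment_isCompact _ _)
  have hKconn : IsConnected Ksetᶜ := erdos511_conn r0 δ hr0pos hδpos N
  obtain ⟨q, hq1, hq2⟩ := hHLT Kset hKcomp hKconn ε hεpos
  set t : ℝ := sSup ((fun z => ‖q.eval z‖) '' Kset) with htdef
  have hmemK := erdos511_memK r0 δ hr0pos N
  -- basic bounds for members of K
  have hKb : ∀ w ∈ Kset, |w.re| ≤ 2*r0 ∧ 0 ≤ w.im ∧ w.im ≤ ρ/2 := by
    intro w hw
    obtain ⟨k, him, hre⟩ := (hmemK w).mp hw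
    have hkN : ((k:ℕ):ℝ) ≤ (N:ℝ) - 1 := by
      have hk1 : (k:ℕ) + 1 ≤ N := k.2
      have := Nat.cast_le (α := ℝ) |>.mpr hk1
      push_cast at this
      linarith
    refine ⟨hre, ?_, ?_⟩
    · rw [him]; positivity
    · rw [him]
      have hNne : (N:ℝ) ≠ 0 := by linarith
      calc ((k:ℕ):ℝ)*δ ≤ ((N:ℝ)-1)*δ := mul_le_mul_of_nonneg_right hkN hδpos.le
        _ ≤ (N:ℝ)*δ := by nlinarith
        _ = ρ/2 := by rw [hδdef]; field_simp
  -- nonemptiness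
  have hw0 : ((⟨2*r0, 0⟩ : ℂ)) ∈ Kset := by
    apply (hmemK _).mpr
    refine ⟨⟨0, hNpos⟩, ?_, ?_⟩
    · show (0:ℝ) = ((0:ℕ):ℝ)*δ
      simp
    · show |(2*r0 : ℝ)| ≤ 2*r0
      rw [abs_of_pos (by linarith)]
  have hKne : Kset.Nonempty := ⟨_, hw0⟩
  -- rectangle bound for the sublevel set
  have hLrect : ∀ z : ℂ, ‖q.eval z‖ ≤ t → |z.re| ≤ 2*r0 + ρ ∧ |z.im| ≤ ρ := by
    intro z hz
    have hzF : Metric.infDist z Kset ≤ ε := hq2 hz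
    obtain ⟨w, hwK, hwd⟩ := hKcomp.exists_infDist_eq_dist hKne z
    have hdist : dist z w ≤ ε := by rw [← hwd]; exact hzF
    obtain ⟨hwre, hwim0, hwimr⟩ := hKb w hwK
    have hsubre : |z.re - w.re| ≤ ε := by
      refine le_trans ?_ hdist
      rw [Complex.dist_eq]
      simpa [Complex.sub_re] using Complex.abs_re_le_norm (z - w)
    have hsubim : |z.im - w.im| ≤ ε := by
      refine le_trans ?_ hdist
      rw [Complex.dist_eq]
      simpa [Complex.sub_im] using Complex.abs_im_le_norm (z - w)
    constructor
    · calc |z.re| = |w.re + (z.re - w.re)| := by ring_nf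
        _ ≤ |w.re| + |z.re - w.re| := abs_add_le _ _
        _ ≤ 2*r0 + ρ := by linarith [hεpos, hερ, hρpos]
    · have hwim : |w.im| ≤ ρ/2 := by rw [abs_of_nonneg hwim0]; exact hwimr
      calc |z.im| = |w.im + (z.im - w.im)| := by ring_nf
        _ ≤ |w.im| + |z.im - w.im| := abs_add_le _ _
        _ ≤ ρ := by linarith
  -- sup bounds
  have hqw0 : ‖q.eval (⟨2*r0, 0⟩ : ℂ)‖ ≤ t := hq1 hw0
  have ht0 : 0 ≤ t := le_trans (norm_nonneg _) hqw0
  -- a far point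
  have hz0 : t < ‖q.eval ((⟨2*r0 + ρ + 1, 0⟩ : ℂ))‖ := by
    by_contra hle
    push_neg at hle
    obtain ⟨hre, _⟩ := hLrect _ hle
    have : |(2*r0 + ρ + 1 : ℝ)| ≤ 2*r0 + ρ := hre
    rw [abs_of_pos (by linarith)] at this
    linarith
  have hqne : q ≠ 0 := by
    rintro rfl
    simp at hz0
    linarith
  have hndeg : q.natDegree ≠ 0 := by
    intro h0
    obtain ⟨x, hx⟩ := Polynomial.natDegree_eq_zero.mp h0
    rw [← hx] at hz0 hqw0
    simp only [Polynomial.eval_C] at hz0 hqw0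
    linarith
  have htpos : 0 < t := by
    have hne : ((⟨-(2*r0), ((⟨0, hNpos⟩ : Fin N):ℕ)*δ⟩ : ℂ)) ≠ ((⟨2*r0, ((⟨0, hNpos⟩ : Fin N):ℕ)*δ⟩ : ℂ)) := by
      intro h
      have := congrArg Complex.re h
      simp at this
      linarith
    have hinf := erdos511_segment_infinite _ _ hne
    have hseg0 : segment ℝ ((⟨-(2*r0), ((⟨0, hNpos⟩ : Fin N):ℕ)*δ⟩ : ℂ)) ((⟨2*r0, ((⟨0, hNpos⟩ : Fin N):ℕ)*δ⟩ : ℂ))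
        ⊆ Kset := by
      rw [hKdef]
      exact Set.subset_iUnion
        (fun k : Fin N => segment ℝ ((⟨-(2*r0), k*δ⟩ : ℂ)) ((⟨2*r0, k*δ⟩ : ℂ))) (⟨0, hNpos⟩ : Fin N)
    have hnotsub : ¬ (segment ℝ ((⟨-(2*r0), ((⟨0, hNpos⟩ : Fin N):ℕ)*δ⟩ : ℂ))
        ((⟨2*r0, ((⟨0, hNpos⟩ : Fin N):ℕ)*δ⟩ : ℂ)) ⊆ {x | q.IsRoot x}) := by
      intro hsub
      exact hinf ((Polynomial.finite_setOf_isRoot hqne).subset hsub)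
    obtain ⟨w, hwseg, hwnr⟩ := Set.not_subset.mp hnotsub
    have hpos : 0 < ‖q.eval w‖ := norm_pos_iff.mpr hwnr
    exact lt_of_lt_of_le hpos (hq1 (hseg0 hwseg))
  set n := q.natDegree with hn
  set a := q.leadingCoeff with ha
  have hane : a ≠ 0 := Polynomial.leadingCoeff_ne_zero.mpr hqne
  have haabs : 0 < ‖a‖ := norm_pos_iff.mpr hane
  -- the symmetrized polynomial
  set G := erdos511G q ((r0^2 : ℝ) : ℂ) with hGdefn
  have hGcoeff : G.coeff (2*n) = a := erdos511G_coeff_top q _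
  have hGne : G ≠ 0 := by
    intro h
    rw [h] at hGcoeff
    simp at hGcoeff
    exact hane hGcoeff.symm
  have hGdeg : G.natDegree = 2*n :=
    le_antisymm (erdos511G_natDegree_le q _)
      (Polynomial.le_natDegree_of_ne_zero (by rw [hGcoeff]; exact hane))
  have hGlead : G.leadingCoeff = a := by
    have : G.leadingCoeff = G.coeff G.natDegree := rfl
    rw [this, hGdeg, hGcoeff]
  have hGroots : ∀ z ∈ G.roots, ‖z‖ ≤ r1 := by
    intro z hz
    have hzroot : G.eval z = 0 := (Polynomial.mem_roots'.mp hz).2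
    have hzne : z ≠ 0 := by
      rintro rfl
      rw [erdos511G_eval_zero] at hzroot
      have hb : ((r0^2:ℝ):ℂ) ≠ 0 := Complex.ofReal_ne_zero.mpr (by positivity)
      rcases mul_eq_zero.mp hzroot with h | h
      · exact hane h
      · exact pow_ne_zero _ hb h
    have heval := erdos511G_eval q ((r0^2:ℝ):ℂ) z hzne
    rw [hzroot] at heval
    have hqz : q.eval (z + ((r0^2:ℝ):ℂ)/z) = 0 := by
      rcases mul_eq_zero.mp heval.symm with h | h
      · exact absurd h (pow_ne_zero _ hzne)
      · exact h
    have hmem : ‖q.eval (z + ((r0^2:ℝ):ℂ)/z)‖ ≤ t := by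
      rw [hqz]
      simpa using ht0
    obtain ⟨hre, him⟩ := hLrect _ hmem
    by_contra hgt
    push_neg at hgt
    exact erdos511_geom r0 r1 ρ hr0pos hr01 hρpos.le hρkey z hgt.le hre him
  have hGcirc : ∀ u : ℂ, ‖u‖ = r1 → t * r1^n ≤ ‖G.eval u‖ := by
    intro u hu
    have hune : u ≠ 0 := by
      intro h
      rw [h] at hu
      simp at hu
      exact absurd hu.symm (ne_of_gt hr1pos)
    have heval := erdos511G_eval q ((r0^2:ℝ):ℂ) u hune
    have hout : t < ‖q.eval (u + ((r0^2:ℝ):ℂ)/u)‖ := by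
      by_contra hle
      push_neg at hle
      obtain ⟨hre, him⟩ := hLrect _ hle
      exact erdos511_geom r0 r1 ρ hr0pos hr01 hρpos.le hρkey u hu.ge hre him
    rw [heval, norm_mul, norm_pow, hu]
    calc t * r1^n ≤ ‖q.eval (u + ((r0^2:ℝ):ℂ)/u)‖ * r1^n :=
          mul_le_mul_of_nonneg_right hout.le (pow_nonneg hr1pos.le n)
      _ = r1^n * ‖q.eval (u + ((r0^2:ℝ):ℂ)/u)‖ := mul_comm _ _
  have hcap := erdos511_capacity G hGne r1 (t * r1^n) hr1pos
    (by positivity) hGroots hGcirc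
  rw [hGlead, hGdeg] at hcap
  have htle : t ≤ ‖a‖ * r1^n := by
    have h2 : ‖a‖ * r1^(2*n) = (‖a‖ * r1^n) * r1^n := by
      rw [two_mul, pow_add]
      ring
    rw [h2] at hcap
    exact le_of_mul_le_mul_right hcap (pow_pos hr1pos n)
  -- rescaling factor
  set lam : ℝ := (t / ‖a‖) ^ (((n:ℕ):ℝ))⁻¹ with hlamdef
  have htapos : 0 < t / ‖a‖ := div_pos htpos haabs
  have hlampos : 0 < lam := Real.rpow_pos_of_pos htapos _
  have hlampow : lam ^ n = t / ‖a‖ :=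
    Real.rpow_inv_natCast_pow htapos.le hndeg
  have hlamle : lam ≤ r1 := by
    apply le_of_pow_le_pow_left₀ hndeg hr1pos.le
    rw [hlampow, div_le_iff₀ haabs]
    calc t ≤ ‖a‖ * r1^n := htle
      _ = r1^n * ‖a‖ := mul_comm _ _
  set lc : ℂ := ((lam : ℝ) : ℂ) with hlcdef
  have hlcne : lc ≠ 0 := Complex.ofReal_ne_zero.mpr (ne_of_gt hlampos)
  have hlcabs : ‖lc‖ = lam := by
    rw [hlcdef, Complex.norm_real, Real.norm_eq_abs, abs_of_pos hlampos]
  have hfac : ‖a‖ * lam^n = t := by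
    rw [hlampow]
    field_simp
  -- the rescaled monic polynomial
  set p := Polynomial.C ((a * lc^n)⁻¹) * (q.comp (Polynomial.C lc * Polynomial.X)) with hpdef
  have halcne : a * lc^n ≠ 0 := mul_ne_zero hane (pow_ne_zero _ hlcne)
  have hlinne : (Polynomial.C lc * Polynomial.X : Polynomial ℂ).natDegree = 1 :=
    Polynomial.natDegree_C_mul_X lc hlcne
  have hpm : p.Monic := by
    show p.leadingCoeff = 1
    rw [hpdef, Polynomial.leadingCoeff_mul, Polynomial.leadingCoeff_C,
      Polynomial.leadingCoeff_comp (by rw [hlinne]; norm_num),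
      Polynomial.leadingCoeff_mul, Polynomial.leadingCoeff_C, Polynomial.leadingCoeff_X,
      mul_one]
    exact inv_mul_cancel₀ halcne
  have habs_alc : ‖a * lc ^ n‖ = t := by
    rw [norm_mul, norm_pow, hlcabs]
    exact hfac
  have hpeval : ∀ z : ℂ, ‖p.eval z‖ = ‖q.eval (lc * z)‖ / t := by
    intro z
    rw [hpdef, Polynomial.eval_mul, Polynomial.eval_C, Polynomial.eval_comp,
      Polynomial.eval_mul, Polynomial.eval_C, Polynomial.eval_X, norm_mul, norm_inv,
      habs_alc, inv_mul_eq_div]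
  set E : Set ℂ := {z : ℂ | ‖q.eval (lc * z)‖ ≤ t} with hEdefn
  have hEdef : {z : ℂ | ‖p.eval z‖ ≤ 1} = E := by
    ext z
    simp only [Set.mem_setOf_eq, hpeval z, div_le_one htpos, hEdefn]
  -- scaled segments
  have hsegsub : ∀ k : Fin N,
      segment ℝ ((⟨-(2*r0), k*δ⟩ : ℂ)/lc) ((⟨2*r0, k*δ⟩ : ℂ)/lc) ⊆ E := by
    intro k z hz
    rw [segment_eq_image] at hz
    obtain ⟨θ, hθ, rfl⟩ := hz
    show ‖q.eval (lc * _)‖ ≤ t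
    have hmul : lc * ((1-θ) • ((⟨-(2*r0), k*δ⟩ : ℂ)/lc) + θ • ((⟨2*r0, k*δ⟩ : ℂ)/lc))
        = (1-θ) • (⟨-(2*r0), k*δ⟩ : ℂ) + θ • (⟨2*r0, k*δ⟩ : ℂ) := by
      simp only [Complex.real_smul]
      field_simp
    rw [hmul]
    apply hq1
    rw [hKdef]
    apply Set.mem_iUnion.mpr
    refine ⟨k, ?_⟩
    rw [segment_eq_image]
    exact ⟨θ, hθ, rfl⟩
  have hzsE : ∀ k : Fin N, ((⟨-(2*r0), k*δ⟩ : ℂ)/lc) ∈ E :=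
    fun k => hsegsub k (left_mem_segment ℝ _ _)
  have hcompsub : ∀ k : Fin N,
      segment ℝ ((⟨-(2*r0), k*δ⟩ : ℂ)/lc) ((⟨2*r0, k*δ⟩ : ℂ)/lc)
        ⊆ connectedComponentIn E ((⟨-(2*r0), k*δ⟩ : ℂ)/lc) :=
    fun k => (convex_segment _ _).isPreconnected.subset_connectedComponentIn
      (left_mem_segment ℝ _ _) (hsegsub k)
  have hEbdd : Bornology.IsBounded E := by
    apply (Metric.isBounded_closedBall (x := (0:ℂ)) (r := (2*r0 + 2*ρ)/lam)).subset
    intro z hz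
    have hzL : ‖q.eval (lc * z)‖ ≤ t := hz
    obtain ⟨hre, him⟩ := hLrect _ hzL
    rw [Metric.mem_closedBall, Complex.dist_eq, sub_zero]
    have habs : ‖lc*z‖ ≤ 2*r0 + 2*ρ :=
      le_trans (Complex.norm_le_abs_re_add_abs_im _) (by linarith)
    rw [norm_mul, hlcabs] at habs
    rw [le_div_iff₀ hlampos]
    calc ‖z‖ * lam = lam * ‖z‖ := mul_comm _ _
      _ ≤ 2*r0 + 2*ρ := habs
  -- height separation helper
  have hsep : ∀ i k : Fin N, i ≠ k → δ ≤ |((k:ℕ):ℝ)*δ - ((i:ℕ):ℝ)*δ| := by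
    intro i k hik
    have h1 : (1:ℝ) ≤ |((k:ℕ):ℝ) - ((i:ℕ):ℝ)| := by
      have hne : (k:ℕ) ≠ (i:ℕ) := fun h => hik (Fin.ext h.symm)
      rcases lt_or_gt_of_ne hne with h | h
      · have hcast : ((k:ℕ):ℝ) + 1 ≤ ((i:ℕ):ℝ) := by exact_mod_cast h
        rw [abs_sub_comm, abs_of_nonneg (by linarith)]
        linarith
      · have hcast : ((i:ℕ):ℝ) + 1 ≤ ((k:ℕ):ℝ) := by exact_mod_cast h
        rw [abs_of_nonneg (by linarith)]
        linarith
    calc δ = 1*δ := (one_mul δ).symm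
      _ ≤ (|((k:ℕ):ℝ) - ((i:ℕ):ℝ)|) * δ := mul_le_mul_of_nonneg_right h1 hδpos.le
      _ = |(((k:ℕ):ℝ) - ((i:ℕ):ℝ))*δ| := by
          rw [abs_mul, abs_of_pos hδpos]
      _ = |((k:ℕ):ℝ)*δ - ((i:ℕ):ℝ)*δ| := by
          congr 1
          ring
  -- each component stays in a slab
  have hslab : ∀ k : Fin N, connectedComponentIn E ((⟨-(2*r0), k*δ⟩ : ℂ)/lc)
      ⊆ {z : ℂ | |lam * z.im - ((k:ℕ):ℝ)*δ| < δ/2} := by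
    intro k
    have hUopen : ∀ i : Fin N, IsOpen {z : ℂ | |lam * z.im - ((i:ℕ):ℝ)*δ| < δ/2} := by
      intro i
      apply isOpen_lt _ continuous_const
      exact ((continuous_const.mul Complex.continuous_im).sub continuous_const).abs
    apply IsPreconnected.subset_left_of_subset_union (hUopen k)
      (isOpen_iUnion (fun i : Fin N => isOpen_iUnion (fun _ : i ≠ k => hUopen i)))
    · rw [Set.disjoint_left]
      intro z hzU hzV
      obtain ⟨i, hi⟩ := Set.mem_iUnion.mp hzV
      obtain ⟨hik, hzi⟩ := Set.mem_iUnion.mp hi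
      have hU : |lam * z.im - ((k:ℕ):ℝ)*δ| < δ/2 := hzU
      have hV : |lam * z.im - ((i:ℕ):ℝ)*δ| < δ/2 := hzi
      have h2 := hsep i k hik
      have h3 : |((k:ℕ):ℝ)*δ - ((i:ℕ):ℝ)*δ| < δ := by
        calc |((k:ℕ):ℝ)*δ - ((i:ℕ):ℝ)*δ|
            = |(lam * z.im - ((i:ℕ):ℝ)*δ) - (lam * z.im - ((k:ℕ):ℝ)*δ)| := by
              congr 1
              ring
          _ ≤ |lam * z.im - ((i:ℕ):ℝ)*δ| + |lam * z.im - ((k:ℕ):ℝ)*δ| := abs_sub _ _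
          _ < δ := by linarith
      linarith
    · refine subset_trans (connectedComponentIn_subset E _) ?_
      intro z hzE
      have hzL : ‖q.eval (lc * z)‖ ≤ t := hzE
      have hzF : Metric.infDist (lc*z) Kset ≤ ε := hq2 hzL
      obtain ⟨w, hwK, hwd⟩ := hKcomp.exists_infDist_eq_dist hKne (lc*z)
      have hdist : dist (lc*z) w ≤ ε := by rw [← hwd]; exact hzF
      obtain ⟨i, hwim, _⟩ := (hmemK w).mp hwK
      have hbound : |lam * z.im - ((i:ℕ):ℝ)*δ| < δ/2 := by
        have h1 : |(lc*z).im - w.im| ≤ dist (lc*z) w := by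
          rw [Complex.dist_eq]
          simpa [Complex.sub_im] using Complex.abs_im_le_norm ((lc*z) - w)
        rw [hlcdef, Complex.im_ofReal_mul, hwim] at h1
        have : ε < δ/2 := by rw [hεdef]; linarith
        linarith
      by_cases hik : i = k
      · subst hik
        exact Or.inl hbound
      · exact Or.inr (Set.mem_iUnion.mpr ⟨i, Set.mem_iUnion.mpr ⟨hik, hbound⟩⟩)
    · refine ⟨(⟨-(2*r0), k*δ⟩ : ℂ)/lc, mem_connectedComponentIn (hzsE k), ?_⟩
      show |lam * ((⟨-(2*r0), k*δ⟩ : ℂ)/lc).im - ((k:ℕ):ℝ)*δ| < δ/2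
      have hmul : lam * ((⟨-(2*r0), k*δ⟩ : ℂ)/lc).im = ((k:ℕ):ℝ)*δ := by
        rw [← Complex.im_ofReal_mul, ← hlcdef, mul_div_cancel₀ _ hlcne]
      rw [hmul]
      simp
      linarith
    · exact isPreconnected_connectedComponentIn
  have hzsim : ∀ k : Fin N, lam * (((⟨-(2*r0), k*δ⟩ : ℂ)/lc)).im = ((k:ℕ):ℝ)*δ := by
    intro k
    rw [← Complex.im_ofReal_mul, ← hlcdef, mul_div_cancel₀ _ hlcne]
  -- assemble
  refine ⟨p, hpm, (fun k : Fin N => (⟨-(2*r0), k*δ⟩ : ℂ)/lc), ?_, ?_, ?_⟩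
  · intro k
    show _ ∈ {z : ℂ | ‖p.eval z‖ ≤ 1}
    rw [hEdef]
    exact hzsE k
  · intro i j hij hcon
    rw [hEdef] at hcon
    have hjj : ((⟨-(2*r0), j*δ⟩ : ℂ)/lc) ∈ connectedComponentIn E ((⟨-(2*r0), j*δ⟩ : ℂ)/lc) :=
      mem_connectedComponentIn (hzsE j)
    rw [← hcon] at hjj
    have := hslab i hjj
    have hb : |lam * (((⟨-(2*r0), j*δ⟩ : ℂ)/lc)).im - ((i:ℕ):ℝ)*δ| < δ/2 := this
    rw [hzsim j] at hb
    have h2 := hsep i j hij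
    linarith
  · intro k
    rw [hEdef]
    have hbdd := hEbdd.subset (connectedComponentIn_subset E ((⟨-(2*r0), k*δ⟩ : ℂ)/lc))
    have hm1 : ((⟨-(2*r0), k*δ⟩ : ℂ)/lc) ∈ connectedComponentIn E ((⟨-(2*r0), k*δ⟩ : ℂ)/lc) :=
      mem_connectedComponentIn (hzsE k)
    have hm2 : ((⟨2*r0, k*δ⟩ : ℂ)/lc) ∈ connectedComponentIn E ((⟨-(2*r0), k*δ⟩ : ℂ)/lc) :=
      hcompsub k (right_mem_segment ℝ _ _)
    have hdist := Metric.dist_le_diam_of_mem hbdd hm1 hm2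
    have hAB : ((⟨-(2*r0), k*δ⟩ : ℂ)) - ((⟨2*r0, k*δ⟩ : ℂ)) = ((-(4*r0) : ℝ) : ℂ) := by
      apply Complex.ext <;> simp <;> ring
    have hdval : dist ((⟨-(2*r0), k*δ⟩ : ℂ)/lc) ((⟨2*r0, k*δ⟩ : ℂ)/lc) = 4*r0/lam := by
      rw [Complex.dist_eq, div_sub_div_same, norm_div, hlcabs, hAB, Complex.norm_real, Real.norm_eq_abs,
        abs_neg, abs_of_pos (by linarith)]
    have hcr1 : c * r1 ≤ 4*r0 := by
      have := (le_div_iff₀ hc).mp hr1c.le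
      have h4 : 4*r0 = c0 := by rw [hr0def]; ring
      linarith
    have h2 : c ≤ 4*r0/r1 := by
      rw [le_div_iff₀ hr1pos]
      linarith
    have h3 : 4*r0/r1 ≤ 4*r0/lam :=
      div_le_div_of_nonneg_left (by linarith) hlampos hlamle
    calc c ≤ 4*r0/lam := by linarith
      _ = dist ((⟨-(2*r0), k*δ⟩ : ℂ)/lc) ((⟨2*r0, k*δ⟩ : ℂ)/lc) := hdval.symm
      _ ≤ _ := hdist
end
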